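/- Let A be a memory interval that is partitioned by a single branch B (disjoint from A) into two components, the left component U₀ (vertices to the left of B) and the right component U₁ (vertices to the right of B). Then every vertex of the right component U₁ precedes every vertex of the left component U₀ in vEB_ε(T). -/

import Mathlib

namespace VEB

inductive OTree : Type where
  | node : List OTree → OTree

def OTree.children : OTree → List OTree
  | .node cs => cs

mutual
  def height : OTree → ℕ
    | .node cs => 1 + heightList cs
  def heightList : List OTree → ℕ
    | [] => 0
    | c :: cs => max (height c) (heightList cs)
end

def subtreeAt? : OTree → List ℕ → Option OTree
  | t, [] => some t
  | t, i :: p =>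
    match t.children[i]? with
    | some c => subtreeAt? c p
    | none => none

/-- `p` is (the path of) a vertex of `t`. -/
def IsVertex (t : OTree) (p : List ℕ) : Prop := (subtreeAt? t p).isSome

/-- `p` is a leaf of `t`. -/
def IsLeaf (t : OTree) (p : List ℕ) : Prop := subtreeAt? t p = some (.node [])

/-- All leaves of `t` are at the same depth (the bottom level). -/
def Uniform (t : OTree) : Prop := ∀ p, IsLeaf t p → p.length + 1 = height t

/-- The top `m+1` levels of `t` (the truncation of height `m+1`). -/
def trunc : ℕ → OTree → OTree
  | 0, _ => .node []
  | m+1, t => .node (t.children.map (trunc m))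

/-- Paths of the vertices at depth `m`, in left-to-right order. -/
def levelPaths : ℕ → OTree → List (List ℕ)
  | 0, _ => [[]]
  | m+1, t => (t.children.zipIdx.map fun ic => (levelPaths m ic.1).map (ic.2 :: ·)).flatten

/-- The level at which a tree of height `h` is cut: `max ⌊ε h⌋ 1`. -/
noncomputable def cutLevel (ε : ℝ) (h : ℕ) : ℕ := max ⌊ε * (h : ℝ)⌋₊ 1

/-- The van Emde Boas order of the vertex paths of `t` (with recursion fuel). -/
noncomputable def vEBAux (ε : ℝ) : ℕ → OTree → List (List ℕ)
  | 0, _ => []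
  | fuel+1, t =>
    if height t ≤ 1 then [[]]
    else
      let m := cutLevel ε (height t)
      vEBAux ε fuel (trunc (m - 1) t) ++
        ((levelPaths m t).map fun q =>
          match subtreeAt? t q with
          | some s => (vEBAux ε fuel s).map (q ++ ·)
          | none => []).flatten

/-- The van Emde Boas order `vEB_ε(t)` of the vertex paths of `t`. -/
noncomputable def vEB (ε : ℝ) (t : OTree) : List (List ℕ) := vEBAux ε (height t) t

/-- Position (index) of vertex `p` in the van Emde Boas order. -/
noncomputable def pos (ε : ℝ) (t : OTree) (p : List ℕ) : ℕ := (vEB ε t).idxOf p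

/-- `A` is a set of vertices occupying consecutive positions in `vEB_ε(t)`. -/
def MemInterval (ε : ℝ) (t : OTree) (A : Set (List ℕ)) : Prop :=
  ∃ i n, A = {p | p ∈ ((vEB ε t).drop i).take n}

/-- The vertices of the decomposition `D` of `t`: pairs `(p, k)` of the root path
and the height of a decomposition subtree (with recursion fuel). -/
noncomputable def decompAux (ε : ℝ) : ℕ → OTree → List (List ℕ × ℕ)
  | 0, _ => []
  | fuel+1, t =>
    if height t ≤ 1 then [([], 1)]
    else
      let m := cutLevel ε (height t)
      ([], height t) ::
        (decompAux ε fuel (trunc (m - 1) t) ++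
          ((levelPaths m t).map fun q =>
            match subtreeAt? t q with
            | some s => (decompAux ε fuel s).map fun r => (q ++ r.1, r.2)
            | none => []).flatten)

/-- The vertices of the decomposition `D` of `t`. -/
noncomputable def decompVerts (ε : ℝ) (t : OTree) : List (List ℕ × ℕ) :=
  decompAux ε (height t) t

/-- The children in the decomposition tree `D` of the decomposition vertex `(p, k)`:
the top tree followed by the bottom trees in left-to-right order. -/
noncomputable def dChildren (ε : ℝ) (t : OTree) (p : List ℕ) (k : ℕ) : List (List ℕ × ℕ) :=
  if k ≤ 1 then []
  else
    match subtreeAt? t p with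
    | some s =>
      (p, cutLevel ε k) ::
        (levelPaths (cutLevel ε k) s).map fun q => (p ++ q, k - cutLevel ε k)
    | none => []

/-- The decomposition subtree `(p, k)` contains the vertex `w` of `t`;
equivalently, the leaf `{w}` of `D` lies in the subtree of `D` rooted at `(p, k)`. -/
def DContains (p : List ℕ) (k : ℕ) (w : List ℕ) : Prop :=
  p <+: w ∧ w.length < p.length + k

/-- Vertex `v` is to the left of the branch with leaf `ℓ`. -/
def LeftOfBranch (v ℓ : List ℕ) : Prop := List.Lex (· < ·) v (ℓ.take v.length)

/-- Vertex `v` is to the right of the branch with leaf `ℓ`. -/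
def RightOfBranch (v ℓ : List ℕ) : Prop := List.Lex (· < ·) (ℓ.take v.length) v

/-- Every internal vertex of `t` has at least `a` children. -/
def MinArity (t : OTree) (a : ℕ) : Prop :=
  ∀ p s, subtreeAt? t p = some s → s.children ≠ [] → a ≤ s.children.length

/-- Every internal vertex of `t` has at most `b` children. -/
def MaxArity (t : OTree) (b : ℕ) : Prop :=
  ∀ p s, subtreeAt? t p = some s → s.children.length ≤ b

/-- `w` lies on the leftmost branch descending from `v` (always taking the leftmost child). -/
def OnLeftmostBranch (v w : List ℕ) : Prop :=
  v <+: w ∧ ∀ n (hn : n < w.length), v.length ≤ n → w.get ⟨n, hn⟩ = 0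

/-- `w` lies on the rightmost branch descending from `v` (always taking the rightmost child). -/
def OnRightmostBranch (t : OTree) (v w : List ℕ) : Prop :=
  v <+: w ∧ ∀ n (hn : n < w.length), v.length ≤ n →
    ∀ s, subtreeAt? t (w.take n) = some s → w.get ⟨n, hn⟩ + 1 = s.children.length




abbrev LexLt (a b : List ℕ) : Prop := List.Lex (· < ·) a b

theorem lex_irrefl (a : List ℕ) : ¬ LexLt a a := by
  induction a with
  | nil => intro h; cases h
  | cons x xs ih => intro h; cases h with
    | cons h => exact ih h
    | rel h => exact lt_irrefl _ h

theorem lex_asymm {a b : List ℕ} (h1 : LexLt a b) (h2 : LexLt b a) : False := by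
  induction a generalizing b with
  | nil => cases h2
  | cons x xs ih =>
    cases h1 with
    | cons h1' => cases h2 with
      | cons h2' => exact ih h1' h2'
      | rel h => exact lt_irrefl _ h
    | rel h => cases h2 with
      | cons _ => exact lt_irrefl _ h
      | rel h' => exact absurd h (lt_asymm h')

theorem lex_append_iff {a b c : List ℕ} : LexLt (a ++ b) (a ++ c) ↔ LexLt b c := by
  induction a with
  | nil => simp
  | cons x xs ih =>
    simp only [List.cons_append]
    constructor
    · intro h; cases h with
      | cons h => exact ih.1 h
      | rel h => exact absurd h (lt_irrefl _)
    · intro h; exact List.Lex.cons (ih.2 h)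

theorem lex_append_of_lex {a c : List ℕ} (hlen : a.length = c.length)
    (h : LexLt a c) (b d : List ℕ) : LexLt (a ++ b) (c ++ d) := by
  induction h with
  | nil => simp at hlen
  | @cons x l1 l2 h ih =>
    simp only [List.length_cons, Nat.add_right_cancel_iff] at hlen
    exact List.Lex.cons (ih hlen)
  | rel h => exact List.Lex.rel h

theorem eq_or_lex_of_lex_append {a c b d : List ℕ} (hlen : a.length = c.length)
    (h : LexLt (a ++ b) (c ++ d)) : a = c ∨ LexLt a c := by
  induction a generalizing c with
  | nil => cases c with
    | nil => exact Or.inl rfl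
    | cons y ys => simp at hlen
  | cons x xs ih =>
    cases c with
    | nil => simp at hlen
    | cons y ys =>
      simp only [List.length_cons, Nat.add_right_cancel_iff] at hlen
      simp only [List.cons_append] at h
      cases h with
      | cons h =>
        rcases ih hlen h with h' | h'
        · exact Or.inl (by rw [h'])
        · exact Or.inr (List.Lex.cons h')
      | rel h => exact Or.inr (List.Lex.rel h)

theorem lex_total_of_ne {a c : List ℕ} (hlen : a.length = c.length) (hne : a ≠ c) :
    LexLt a c ∨ LexLt c a := by
  induction a generalizing c with
  | nil => cases c with
    | nil => exact absurd rfl hne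
    | cons y ys => simp at hlen
  | cons x xs ih =>
    cases c with
    | nil => simp at hlen
    | cons y ys =>
      simp only [List.length_cons, Nat.add_right_cancel_iff] at hlen
      rcases lt_trichotomy x y with h | rfl | h
      · exact Or.inl (List.Lex.rel h)
      · have : xs ≠ ys := fun h => hne (by rw [h])
        rcases ih hlen this with h' | h'
        · exact Or.inl (List.Lex.cons h')
        · exact Or.inr (List.Lex.cons h')
      · exact Or.inr (List.Lex.rel h)



theorem height_pos (t : OTree) : 0 < height t := by
  cases t with | node cs => rw [height]; omega

theorem height_le_of_mem {c : OTree} {cs : List OTree} (h : c ∈ cs) :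
    height c ≤ heightList cs := by
  induction cs with
  | nil => cases h
  | cons d ds ih =>
    rw [heightList]
    rcases List.mem_cons.1 h with rfl | h'
    · exact le_max_left _ _
    · exact le_trans (ih h') (le_max_right _ _)

theorem subtreeAt?_append (t : OTree) (p q : List ℕ) :
    subtreeAt? t (p ++ q) = (subtreeAt? t p).bind (fun s => subtreeAt? s q) := by
  induction p generalizing t with
  | nil => simp [subtreeAt?]
  | cons i p' ih =>
    simp only [List.cons_append, subtreeAt?]
    cases t.children[i]? with
    | none => simp
    | some c => simp [ih]

theorem height_subtree {t s : OTree} {p : List ℕ} (h : subtreeAt? t p = some s) :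
    height s + p.length ≤ height t := by
  induction p generalizing t with
  | nil => simp [subtreeAt?] at h; subst h; simp
  | cons i p' ih =>
    rw [subtreeAt?] at h
    cases hc : t.children[i]? with
    | none => rw [hc] at h; simp at h
    | some c =>
      rw [hc] at h
      have h1 := ih h
      have h2 : height c ≤ heightList t.children :=
        height_le_of_mem (List.mem_of_getElem? hc)
      cases t with | node cs =>
        rw [height]
        simp only [OTree.children] at h2
        simp only [List.length_cons]
        omega

theorem isVertex_prefix {t : OTree} {p q : List ℕ} (h : IsVertex t (p ++ q)) :
    IsVertex t p := by
  rw [IsVertex, subtreeAt?_append] at h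
  cases hs : subtreeAt? t p with
  | none => rw [hs] at h; simp at h
  | some s => rw [IsVertex, hs]; rfl

theorem heightList_eq_zero {cs : List OTree} (h : heightList cs = 0) : cs = [] := by
  cases cs with
  | nil => rfl
  | cons c cs' =>
    rw [heightList] at h
    have := height_pos c
    omega

theorem exists_height_eq {cs : List OTree} (h : heightList cs ≠ 0) :
    ∃ c ∈ cs, height c = heightList cs := by
  induction cs with
  | nil => rw [heightList] at h; exact absurd rfl h
  | cons c cs' ih =>
    rw [heightList]
    rcases le_or_gt (heightList cs') (height c) with h' | h'
    · exact ⟨c, List.mem_cons_self, (max_eq_left h').symm⟩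
    · have : heightList cs' ≠ 0 := by omega
      obtain ⟨d, hd, hd2⟩ := ih this
      exact ⟨d, List.mem_cons_of_mem _ hd, by omega⟩

theorem exists_deep_leaf (t : OTree) : ∃ p, IsLeaf t p ∧ p.length + 1 = height t := by
  generalize hn : height t = n
  induction n using Nat.strong_induction_on generalizing t with
  | _ n ih =>
    cases t with | node cs =>
    rw [height] at hn
    by_cases h0 : heightList cs = 0
    · refine ⟨[], ?_, by simp <;> omega⟩
      rw [IsLeaf, subtreeAt?, heightList_eq_zero h0]
    · obtain ⟨c, hc, hch⟩ := exists_height_eq h0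
      obtain ⟨i, hi, hie⟩ := List.mem_iff_getElem.1 hc
      have hlt : height c < n := by omega
      obtain ⟨p', hp', hp'l⟩ := ih (height c) hlt c rfl
      refine ⟨i :: p', ?_, by simp <;> omega⟩
      rw [IsLeaf, subtreeAt?]
      simp only [OTree.children]
      rw [List.getElem?_eq_getElem hi, hie]
      exact hp'

theorem height_trunc (n : ℕ) (t : OTree) : height (trunc n t) = min (n + 1) (height t) := by
  induction n generalizing t with
  | zero =>
    cases t with | node cs =>
    have := height_pos (OTree.node cs)
    simp [trunc, height, heightList]
  | succ m ih =>
    cases t with | node cs =>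
    rw [trunc, height, height]
    simp only [OTree.children]
    have : heightList (cs.map (trunc m)) = min (m + 1) (heightList cs) := by
      induction cs with
      | nil => simp [heightList]
      | cons c cs' ih2 =>
        simp only [List.map_cons, heightList]
        rw [ih2, ih c]
        omega
    omega

theorem subtreeAt?_trunc (n : ℕ) (t : OTree) (p : List ℕ) :
    subtreeAt? (trunc n t) p =
      if p.length ≤ n then (subtreeAt? t p).map (trunc (n - p.length)) else none := by
  induction p generalizing n t with
  | nil => simp [subtreeAt?]
  | cons i p' ih =>
    cases t with | node cs =>
    cases n with
    | zero =>
      simp only [trunc, subtreeAt?, OTree.children, List.getElem?_nil]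
      simp
    | succ m =>
      simp only [trunc, subtreeAt?, OTree.children, List.getElem?_map]
      cases hc : cs[i]? with
      | none => simp
      | some c =>
        simp only [Option.map_some]
        rw [ih]
        simp only [List.length_cons]
        by_cases h : p'.length ≤ m
        · rw [if_pos h, if_pos (by omega)]
          rw [show m + 1 - (p'.length + 1) = m - p'.length from by omega]
        · rw [if_neg h, if_neg (by omega)]

theorem trunc_eq_nilnode {n : ℕ} {s : OTree} :
    trunc n s = OTree.node [] ↔ n = 0 ∨ s.children = [] := by
  cases n with
  | zero => simp [trunc]
  | succ m =>
    cases s with | node cs =>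
    simp [trunc, OTree.children]

theorem isLeaf_trunc {n : ℕ} {t : OTree} {p : List ℕ} :
    IsLeaf (trunc n t) p ↔
      (p.length ≤ n ∧ ∃ s, subtreeAt? t p = some s ∧ (n = p.length ∨ s.children = [])) := by
  rw [IsLeaf, subtreeAt?_trunc]
  by_cases h : p.length ≤ n
  · rw [if_pos h]
    cases hs : subtreeAt? t p with
    | none => simp [h]
    | some s =>
      simp only [Option.map_some, Option.some_inj, h, true_and]
      rw [trunc_eq_nilnode]
      constructor
      · rintro (h1 | h1)
        · exact ⟨s, rfl, Or.inl (by omega)⟩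
        · exact ⟨s, rfl, Or.inr h1⟩
      · rintro ⟨s', hs', h1 | h1⟩
        · exact Or.inl (by omega)
        · cases hs'; exact Or.inr h1
  · rw [if_neg h]; simp [h]

theorem uniform_trunc {t : OTree} (ht : Uniform t) {n : ℕ} (hn : n + 1 ≤ height t) :
    Uniform (trunc n t) := by
  intro p hp
  rw [isLeaf_trunc] at hp
  obtain ⟨hle, s, hs, hcase⟩ := hp
  rw [height_trunc, min_eq_left hn]
  rcases hcase with h | h
  · omega
  · have : s = OTree.node [] := by cases s; simp [OTree.children] at h; rw [h]
    subst this
    have := ht p hs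
    omega

theorem leaf_take {t : OTree} (ht : Uniform t) {ℓ : List ℕ} (hℓ : IsLeaf t ℓ)
    {k : ℕ} (hk : k + 1 ≤ height t) : IsLeaf (trunc k t) (ℓ.take k) := by
  have hlen : ℓ.length + 1 = height t := ht ℓ hℓ
  have hkl : k ≤ ℓ.length := by omega
  have hlen2 : (ℓ.take k).length = k := by simp <;> omega
  rw [isLeaf_trunc]
  have : IsVertex t (ℓ.take k) := by
    apply isVertex_prefix (q := ℓ.drop k)
    rw [List.take_append_drop, IsVertex, hℓ]
    rfl
  rw [IsVertex] at this
  cases hs : subtreeAt? t (ℓ.take k) with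
  | none => rw [hs] at this; simp at this
  | some s => exact ⟨by omega, s, rfl, Or.inl (by omega)⟩

theorem subtree_of_leaf {t : OTree} {ℓ : List ℕ} (hℓ : IsLeaf t ℓ) {m : ℕ}
    (hm : m ≤ ℓ.length) :
    ∃ s, subtreeAt? t (ℓ.take m) = some s ∧ IsLeaf s (ℓ.drop m) := by
  have := hℓ
  rw [IsLeaf] at this
  conv at this => lhs; rw [← List.take_append_drop m ℓ]
  rw [subtreeAt?_append] at this
  cases hs : subtreeAt? t (ℓ.take m) with
  | none => rw [hs] at this; simp at this
  | some s =>
    rw [hs] at this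
    exact ⟨s, rfl, this⟩

theorem uniform_subtree {t s : OTree} (ht : Uniform t) {q : List ℕ}
    (hq : subtreeAt? t q = some s) (hne : ∃ p, IsLeaf s p) :
    Uniform s ∧ height s + q.length = height t := by
  have key : ∀ p, IsLeaf s p → p.length + 1 + q.length = height t := by
    intro p hp
    have : IsLeaf t (q ++ p) := by
      rw [IsLeaf, subtreeAt?_append, hq]; exact hp
    have := ht _ this
    simp at this
    omega
  obtain ⟨p0, hp0, hp0l⟩ := exists_deep_leaf s
  have hh : height s + q.length = height t := by
    have := key p0 hp0; omega
  refine ⟨fun p hp => ?_, hh⟩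
  have := key p hp
  omega



theorem not_left_of_prefix {v ℓ : List ℕ} (h : v <+: ℓ) : ¬ LeftOfBranch v ℓ := by
  rw [LeftOfBranch, ← List.prefix_iff_eq_take.1 h]
  exact lex_irrefl v

theorem not_right_of_prefix {v ℓ : List ℕ} (h : v <+: ℓ) : ¬ RightOfBranch v ℓ := by
  rw [RightOfBranch, ← List.prefix_iff_eq_take.1 h]
  exact lex_irrefl v

theorem not_left_and_right {v ℓ : List ℕ} (h : LeftOfBranch v ℓ) : ¬ RightOfBranch v ℓ :=
  fun h' => lex_asymm h h'

theorem mem_levelPaths {m : ℕ} {t : OTree} {q : List ℕ} (h : q ∈ levelPaths m t) :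
    q.length = m ∧ IsVertex t q := by
  induction m generalizing t q with
  | zero =>
    rw [levelPaths] at h
    simp at h
    subst h
    exact ⟨rfl, by rw [IsVertex, subtreeAt?]; rfl⟩
  | succ n ih =>
    rw [levelPaths] at h
    rw [List.mem_flatten] at h
    obtain ⟨l, hl, hq⟩ := h
    rw [List.mem_map] at hl
    obtain ⟨⟨c, i⟩, hic, rfl⟩ := hl
    rw [List.mem_map] at hq
    obtain ⟨q', hq', rfl⟩ := hq
    obtain ⟨hlen, hv⟩ := ih hq'
    rw [List.mem_zipIdx_iff_getElem?] at hic
    refine ⟨by simp [hlen], ?_⟩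
    rw [IsVertex, subtreeAt?, hic]
    exact hv

theorem vertex_mem_levelPaths {m : ℕ} {t : OTree} {q : List ℕ} (hlen : q.length = m)
    (hv : IsVertex t q) : q ∈ levelPaths m t := by
  induction m generalizing t q with
  | zero =>
    rw [List.length_eq_zero_iff] at hlen
    subst hlen
    rw [levelPaths]; simp
  | succ n ih =>
    cases q with
    | nil => simp at hlen
    | cons i q' =>
      rw [IsVertex, subtreeAt?] at hv
      cases hc : t.children[i]? with
      | none => rw [hc] at hv; simp at hv
      | some c =>
        rw [hc] at hv
        rw [levelPaths, List.mem_flatten]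
        refine ⟨(levelPaths n c).map (i :: ·), ?_, ?_⟩
        · rw [List.mem_map]
          exact ⟨(c, i), List.mem_zipIdx_iff_getElem?.2 hc, rfl⟩
        · rw [List.mem_map]
          simp at hlen
          exact ⟨q', ih hlen hv, rfl⟩

theorem pairwise_levelPaths (m : ℕ) (t : OTree) :
    (levelPaths m t).Pairwise LexLt := by
  induction m generalizing t with
  | zero => rw [levelPaths]; simp
  | succ n ih =>
    rw [levelPaths, List.pairwise_flatten]
    constructor
    · intro l hl
      rw [List.mem_map] at hl
      obtain ⟨⟨c, i⟩, _, rfl⟩ := hl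
      rw [List.pairwise_map]
      exact (ih c).imp fun h => List.Lex.cons h
    · rw [List.pairwise_map]
      have henum : t.children.zipIdx.Pairwise (fun a b => a.2 < b.2) := by
        rw [List.pairwise_iff_getElem]
        intro i j hi hj hij
        rw [List.getElem_zipIdx, List.getElem_zipIdx]
        omega
      refine henum.imp ?_
      rintro ⟨c, i⟩ ⟨c', i'⟩ h x hx y hy
      rw [List.mem_map] at hx hy
      obtain ⟨a, _, rfl⟩ := hx
      obtain ⟨b, _, rfl⟩ := hy
      exact List.Lex.rel h

theorem nodup_levelPaths (m : ℕ) (t : OTree) : (levelPaths m t).Nodup :=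
  (pairwise_levelPaths m t).imp fun h heq => absurd (heq ▸ h) (lex_irrefl _)

theorem cutLevel_bounds {h : ℕ} (hh : 2 ≤ h) {ε : ℝ} (hε1 : ε ≤ 1/2) (hε0 : 0 < ε) :
    1 ≤ cutLevel ε h ∧ cutLevel ε h ≤ h - 1 := by
  refine ⟨le_max_right _ _, ?_⟩
  rw [cutLevel]
  have h1 : ⌊ε * (h : ℝ)⌋₊ ≤ h / 2 := by
    have : ε * (h : ℝ) ≤ (h : ℝ) / 2 := by
      rw [div_eq_mul_inv, mul_comm]
      apply mul_le_mul_of_nonneg_left (by linarith) (by positivity)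
    calc ⌊ε * (h : ℝ)⌋₊ ≤ ⌊(h : ℝ) / 2⌋₊ := Nat.floor_le_floor this
    _ = h / 2 := by
      rw [show ((2:ℝ)) = ((2:ℕ):ℝ) by norm_num, Nat.floor_div_natCast, Nat.floor_natCast]
  have : h / 2 ≤ h - 1 := by omega
  omega



/-- Block function for the bottom trees. -/
noncomputable def blockFn (ε : ℝ) (fuel : ℕ) (t : OTree) (q : List ℕ) : List (List ℕ) :=
  match subtreeAt? t q with
  | some s => (vEBAux ε fuel s).map (q ++ ·)
  | none => []

theorem vEBAux_succ_of_lt {ε : ℝ} {fuel : ℕ} {t : OTree} (ht : 1 < height t) :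
    vEBAux ε (fuel+1) t =
      vEBAux ε fuel (trunc (cutLevel ε (height t) - 1) t) ++
        ((levelPaths (cutLevel ε (height t)) t).map (blockFn ε fuel t)).flatten := by
  rw [vEBAux, if_neg (by omega)]
  rfl

theorem length_lt_of_mem_vEBAux {ε : ℝ} {fuel : ℕ} {t : OTree} {x : List ℕ}
    (hx : x ∈ vEBAux ε fuel t) : x.length < height t := by
  induction fuel generalizing t x with
  | zero => rw [vEBAux] at hx; cases hx
  | succ n ih =>
    by_cases h1 : height t ≤ 1
    · rw [vEBAux, if_pos h1] at hx
      simp at hx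
      subst hx
      simpa using height_pos t
    · rw [vEBAux_succ_of_lt (by omega)] at hx
      rcases List.mem_append.1 hx with hx | hx
      · have := ih hx
        rw [height_trunc] at this
        have := height_pos t
        omega
      · rw [List.mem_flatten] at hx
        obtain ⟨l, hl, hxl⟩ := hx
        rw [List.mem_map] at hl
        obtain ⟨q, hq, rfl⟩ := hl
        rw [blockFn] at hxl
        cases hs : subtreeAt? t q with
        | none => rw [hs] at hxl; cases hxl
        | some s =>
          rw [hs] at hxl
          rw [List.mem_map] at hxl
          obtain ⟨r, hr, rfl⟩ := hxl
          have h2 := ih hr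
          have h3 := height_subtree hs
          have h4 := (mem_levelPaths hq).1
          simp only [List.length_append]
          omega

theorem vEBAux_head {ε : ℝ} (hε0 : 0 < ε) (hε1 : ε ≤ 1/2) {fuel : ℕ} {t : OTree}
    (hf : height t ≤ fuel) : ∃ rest, vEBAux ε fuel t = [] :: rest := by
  induction fuel generalizing t with
  | zero => have := height_pos t; omega
  | succ n ih =>
    by_cases h1 : height t ≤ 1
    · exact ⟨[], by rw [vEBAux, if_pos h1]⟩
    · have hcb := cutLevel_bounds (h := height t) (by omega) hε1 hε0
      rw [vEBAux_succ_of_lt (by omega)]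
      have htr : height (trunc (cutLevel ε (height t) - 1) t) = cutLevel ε (height t) := by
        rw [height_trunc]
        omega
      obtain ⟨rest, hrest⟩ := ih (t := trunc (cutLevel ε (height t) - 1) t)
        (by rw [htr]; omega)
      rw [hrest]
      exact ⟨rest ++ _, rfl⟩

theorem vEBAux_nodup {ε : ℝ} (hε0 : 0 < ε) (hε1 : ε ≤ 1/2) {fuel : ℕ} {t : OTree}
    (hf : height t ≤ fuel) : (vEBAux ε fuel t).Nodup := by
  induction fuel generalizing t with
  | zero => have := height_pos t; omega
  | succ n ih =>
    by_cases h1 : height t ≤ 1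
    · rw [vEBAux, if_pos h1]; simp
    · have hcb := cutLevel_bounds (h := height t) (by omega) hε1 hε0
      set m := cutLevel ε (height t) with hm
      rw [vEBAux_succ_of_lt (by omega)]
      rw [List.nodup_append]
      have htoplen : ∀ x ∈ vEBAux ε n (trunc (m - 1) t), x.length < m := by
        intro x hx
        have := length_lt_of_mem_vEBAux hx
        rw [height_trunc] at this
        omega
      have hbotlen : ∀ x ∈ ((levelPaths m t).map (blockFn ε n t)).flatten,
          m ≤ x.length ∧ x.take m ∈ levelPaths m t := by
        intro x hx
        rw [List.mem_flatten] at hx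
        obtain ⟨l, hl, hxl⟩ := hx
        rw [List.mem_map] at hl
        obtain ⟨q, hq, rfl⟩ := hl
        rw [blockFn] at hxl
        cases hs : subtreeAt? t q with
        | none => rw [hs] at hxl; cases hxl
        | some s =>
          rw [hs] at hxl
          rw [List.mem_map] at hxl
          obtain ⟨r, hr, rfl⟩ := hxl
          have h4 := (mem_levelPaths hq).1
          constructor
          · simp; omega
          · rw [List.take_append, show q.length = m from h4]
            rw [Nat.sub_self, List.take_zero, List.append_nil,
              List.take_of_length_le (by omega)]
            exact hq
      have hhtr : height (trunc (m - 1) t) ≤ n := by rw [height_trunc]; omega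
      refine ⟨ih hhtr, ?_, ?_⟩
      · rw [List.nodup_flatten]
        constructor
        · intro l hl
          rw [List.mem_map] at hl
          obtain ⟨q, hq, rfl⟩ := hl
          rw [blockFn]
          cases hs : subtreeAt? t q with
          | none => simp
          | some s =>
            have h4 := (mem_levelPaths hq).1
            have h5 := height_subtree hs
            apply List.Nodup.map
            · intro a b hab
              exact List.append_cancel_left hab
            · exact ih (by omega)
        · rw [List.pairwise_map]
          apply List.Pairwise.imp_of_mem (l := levelPaths m t) ?_ (nodup_levelPaths m t)
          intro q q' hqm hq'm hne x hxq hxq'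
          rw [blockFn] at hxq hxq'
          have h4 := (mem_levelPaths hqm).1
          have h4' := (mem_levelPaths hq'm).1
          cases hs : subtreeAt? t q with
          | none => rw [hs] at hxq; cases hxq
          | some s =>
            rw [hs] at hxq
            cases hs' : subtreeAt? t q' with
            | none => rw [hs'] at hxq'; cases hxq'
            | some s' =>
              rw [hs'] at hxq'
              rw [List.mem_map] at hxq hxq'
              obtain ⟨r, _, rfl⟩ := hxq
              obtain ⟨r', _, heq⟩ := hxq'
              exact hne (List.append_inj_left heq.symm (by omega))
      · intro x hx y hx2 hxy
        subst hxy
        have := htoplen x hx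
        have := (hbotlen x hx2).1
        omega



theorem blockFn_some {ε : ℝ} {fuel : ℕ} {t s : OTree} {q : List ℕ}
    (h : subtreeAt? t q = some s) :
    blockFn ε fuel t q = (vEBAux ε fuel s).map (q ++ ·) := by
  rw [blockFn, h]

theorem getElem?_append_split {α : Type*} {A B : List α} {i : ℕ} {x : α}
    (h : (A ++ B)[i]? = some x) :
    (i < A.length ∧ A[i]? = some x) ∨ (A.length ≤ i ∧ B[i - A.length]? = some x) := by
  rw [List.getElem?_append] at h
  by_cases hi : i < A.length
  · exact Or.inl ⟨hi, by rwa [if_pos hi] at h⟩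
  · exact Or.inr ⟨by omega, by rwa [if_neg hi] at h⟩

theorem leftOf_drop_iff {ℓ u : List ℕ} {m : ℕ} (hm : m ≤ ℓ.length) :
    LeftOfBranch (ℓ.take m ++ u) ℓ ↔ LeftOfBranch u (ℓ.drop m) := by
  rw [LeftOfBranch, LeftOfBranch, List.length_append, List.length_take,
    min_eq_left hm, List.take_add]
  exact lex_append_iff

theorem rightOf_drop_iff {ℓ u : List ℕ} {m : ℕ} (hm : m ≤ ℓ.length) :
    RightOfBranch (ℓ.take m ++ u) ℓ ↔ RightOfBranch u (ℓ.drop m) := by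
  rw [RightOfBranch, RightOfBranch, List.length_append, List.length_take,
    min_eq_left hm, List.take_add]
  exact lex_append_iff

theorem leftOf_take_iff {x ℓ : List ℕ} {k : ℕ} (hk : x.length ≤ k) :
    LeftOfBranch x (ℓ.take k) ↔ LeftOfBranch x ℓ := by
  rw [LeftOfBranch, LeftOfBranch, List.take_take, min_eq_left hk]

theorem rightOf_take_iff {x ℓ : List ℕ} {k : ℕ} (hk : x.length ≤ k) :
    RightOfBranch x (ℓ.take k) ↔ RightOfBranch x ℓ := by
  rw [RightOfBranch, RightOfBranch, List.take_take, min_eq_left hk]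

theorem prefix_take_append {ℓ z : List ℕ} {m : ℕ} (h : z <+: ℓ.drop m) :
    ℓ.take m ++ z <+: ℓ := by
  obtain ⟨w, hw⟩ := h
  exact ⟨w, by rw [List.append_assoc, hw, List.take_append_drop]⟩



theorem main_sep {ε : ℝ} (hε0 : 0 < ε) (hε1 : ε ≤ 1/2) :
    ∀ (fuel : ℕ) (t : OTree) (ℓ : List ℕ), height t ≤ fuel → Uniform t → IsLeaf t ℓ →
      (∀ i x, (vEBAux ε fuel t)[i]? = some x → LeftOfBranch x ℓ →
        ∃ (k : ℕ) (z : List ℕ), i < k ∧ (vEBAux ε fuel t)[k]? = some z ∧ z <+: ℓ) ∧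
      (∀ i j x y, (vEBAux ε fuel t)[i]? = some x → (vEBAux ε fuel t)[j]? = some y →
        i < j → LeftOfBranch x ℓ → RightOfBranch y ℓ →
        ∃ (k : ℕ) (z : List ℕ), i < k ∧ k < j ∧ (vEBAux ε fuel t)[k]? = some z ∧ z <+: ℓ) := by
  intro fuel
  induction fuel with
  | zero => intro t ℓ hf _ _; have := height_pos t; omega
  | succ n ih =>
    intro t ℓ hf ht hℓ
    by_cases h1 : height t ≤ 1
    · have hlist : vEBAux ε (n+1) t = [[]] := by rw [vEBAux, if_pos h1]
      have hempty : ∀ (i : ℕ) (x : List ℕ), (vEBAux ε (n+1) t)[i]? = some x → x = [] := by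
        intro i x hx
        rw [hlist] at hx
        cases i with
        | zero => simpa using hx.symm
        | succ k => simp at hx
      constructor
      · intro i x hx hxl
        have := hempty i x hx
        subst this
        simp [LeftOfBranch] at hxl
      · intro i j x y hxi _ _ hxl _
        have := hempty i x hxi
        subst this
        simp [LeftOfBranch] at hxl
    · -- main case
      have hcb := cutLevel_bounds (h := height t) (by omega) hε1 hε0
      set m := cutLevel ε (height t) with hm
      have hℓlen : ℓ.length + 1 = height t := ht ℓ hℓ
      have hmℓ : m ≤ ℓ.length := by omega
      obtain ⟨s, hs, hℓ'⟩ := subtree_of_leaf hℓ hmℓ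
      have hqlen : (ℓ.take m).length = m := by simp; omega
      obtain ⟨hsu, hsh⟩ := uniform_subtree ht hs ⟨_, hℓ'⟩
      rw [hqlen] at hsh
      have hsfuel : height s ≤ n := by omega
      have htru : Uniform (trunc (m-1) t) := uniform_trunc ht (by omega)
      have htrh : height (trunc (m-1) t) = m := by rw [height_trunc]; omega
      have hℓtop : IsLeaf (trunc (m-1) t) (ℓ.take (m-1)) := leaf_take ht hℓ (by omega)
      have hqmem : ℓ.take m ∈ levelPaths m t :=
        vertex_mem_levelPaths hqlen (by rw [IsVertex, hs]; rfl)
      obtain ⟨P₁, P₂, hsplit⟩ := List.append_of_mem hqmem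
      have hpw := pairwise_levelPaths m t
      rw [hsplit, List.pairwise_append] at hpw
      have hP₁ : ∀ q ∈ P₁, LexLt q (ℓ.take m) :=
        fun q hq => hpw.2.2 q hq _ (List.mem_cons_self)
      have hP₂ : ∀ q ∈ P₂, LexLt (ℓ.take m) q :=
        fun q hq => (List.pairwise_cons.1 hpw.2.1).1 q hq
      set T := vEBAux ε n (trunc (m - 1) t) with hT
      set FL := (P₁.map (blockFn ε n t)).flatten with hFL'
      set Q := (vEBAux ε n s).map ((ℓ.take m) ++ ·) with hQ'
      set FR := (P₂.map (blockFn ε n t)).flatten with hFR'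
      have hdec : vEBAux ε (n+1) t = T ++ (FL ++ (Q ++ FR)) := by
        rw [vEBAux_succ_of_lt (by omega), ← hm, hsplit, List.map_append, List.map_cons,
          List.flatten_append, List.flatten_cons, blockFn_some hs]
      -- membership facts for side blocks
      have hmemblk : ∀ (P : List (List ℕ)), (∀ q ∈ P, q ∈ levelPaths m t) →
          ∀ x ∈ (P.map (blockFn ε n t)).flatten,
            ∃ q r, q ∈ P ∧ q.length = m ∧ x = q ++ r := by
        intro P hP x hx
        rw [List.mem_flatten] at hx
        obtain ⟨lb, hlb, hxlb⟩ := hx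
        rw [List.mem_map] at hlb
        obtain ⟨q, hqP, rfl⟩ := hlb
        rw [blockFn] at hxlb
        cases hsq : subtreeAt? t q with
        | none => rw [hsq] at hxlb; cases hxlb
        | some s' =>
          rw [hsq] at hxlb
          rw [List.mem_map] at hxlb
          obtain ⟨r, _, rfl⟩ := hxlb
          exact ⟨q, r, hqP, (mem_levelPaths (hP q hqP)).1, rfl⟩
      have hP₁lp : ∀ q ∈ P₁, q ∈ levelPaths m t := by
        intro q hq; rw [hsplit]; exact List.mem_append_left _ hq
      have hP₂lp : ∀ q ∈ P₂, q ∈ levelPaths m t := by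
        intro q hq; rw [hsplit]
        exact List.mem_append_right _ (List.mem_cons_of_mem _ hq)
      have hFLleft : ∀ x ∈ FL, LeftOfBranch x ℓ := by
        intro x hx
        obtain ⟨q, r, hqP, hql, rfl⟩ := hmemblk P₁ hP₁lp x hx
        rw [LeftOfBranch, List.length_append, hql, List.take_add]
        exact lex_append_of_lex (by rw [hql, hqlen]) (hP₁ q hqP) _ _
      have hFRright : ∀ x ∈ FR, RightOfBranch x ℓ := by
        intro x hx
        obtain ⟨q, r, hqP, hql, rfl⟩ := hmemblk P₂ hP₂lp x hx
        rw [RightOfBranch, List.length_append, hql, List.take_add]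
        exact lex_append_of_lex (by rw [hql, hqlen]) (hP₂ q hqP) _ _
      -- index helpers
      have hgetQ : ∀ (k' : ℕ) (z' : List ℕ), (vEBAux ε n s)[k']? = some z' →
          (vEBAux ε (n+1) t)[T.length + FL.length + k']? = some (ℓ.take m ++ z') := by
        intro k' z' h
        have hk'lt : k' < (vEBAux ε n s).length := (List.getElem?_eq_some_iff.1 h).1
        rw [hdec, List.getElem?_append, if_neg (by omega),
          show T.length + FL.length + k' - T.length = FL.length + k' by omega,
          List.getElem?_append, if_neg (by omega),
          show FL.length + k' - FL.length = k' by omega,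
          List.getElem?_append, if_pos (by rw [hQ', List.length_map]; omega),
          hQ', List.getElem?_map, h]
        rfl
      have hQlen : Q.length = (vEBAux ε n s).length := by rw [hQ', List.length_map]
      obtain ⟨rest, hrest⟩ := vEBAux_head hε0 hε1 hsfuel
      have hqstar : (vEBAux ε (n+1) t)[T.length + FL.length]? = some (ℓ.take m) := by
        have h0 : (vEBAux ε n s)[0]? = some [] := by rw [hrest]; simp
        have := hgetQ 0 [] h0
        simpa using this
      have hQpos : 0 < Q.length := by rw [hQlen, hrest]; simp
      have hQel : ∀ (i₂ : ℕ) (x : List ℕ), Q[i₂]? = some x →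
          ∃ x', (vEBAux ε n s)[i₂]? = some x' ∧ x = ℓ.take m ++ x' := by
        intro i₂ x hx
        rw [hQ', List.getElem?_map] at hx
        cases h' : (vEBAux ε n s)[i₂]? with
        | none => rw [h'] at hx; simp at hx
        | some x' =>
          rw [h'] at hx
          simp at hx
          exact ⟨x', rfl, hx.symm⟩
      have ihtop := ih (trunc (m-1) t) (ℓ.take (m-1)) (by rw [htrh]; omega) htru hℓtop
      have ihsub := ih s (ℓ.drop m) hsfuel hsu hℓ'
      have hpre : ℓ.take m <+: ℓ := List.take_prefix _ _
      constructor
      · -- P1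
        intro i x hx hxl
        rw [hdec] at hx
        rcases getElem?_append_split hx with ⟨hiT, hxT⟩ | ⟨hiT, hx1⟩
        · exact ⟨T.length + FL.length, ℓ.take m, by omega, hqstar, hpre⟩
        · rcases getElem?_append_split hx1 with ⟨hiFL, hxFL⟩ | ⟨hiFL, hx2⟩
          · exact ⟨T.length + FL.length, ℓ.take m, by omega, hqstar, hpre⟩
          · rcases getElem?_append_split hx2 with ⟨hiQ, hxQ⟩ | ⟨hiQ, hxFR⟩
            · obtain ⟨x', hx', rfl⟩ := hQel _ _ hxQ
              have hxl' : LeftOfBranch x' (ℓ.drop m) := (leftOf_drop_iff hmℓ).1 hxl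
              obtain ⟨k', z', hik', hk'z, hz'⟩ := ihsub.1 _ _ hx' hxl'
              exact ⟨T.length + FL.length + k', ℓ.take m ++ z', by omega,
                hgetQ k' z' hk'z, prefix_take_append hz'⟩
            · exact absurd hxl (fun h =>
                lex_asymm h (hFRright x (List.mem_of_getElem? hxFR)))
      · -- S
        intro i j x y hxi hyj hij hxl hyr
        rw [hdec] at hxi hyj
        rcases getElem?_append_split hyj with ⟨hjT, hyT⟩ | ⟨hjT, hy1⟩
        · -- both in T
          have hiT : i < T.length := by omega
          have hxT : T[i]? = some x := by
            rcases getElem?_append_split hxi with ⟨_, h⟩ | ⟨h, _⟩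
            · exact h
            · omega
          have hxlen : x.length ≤ m - 1 := by
            have := length_lt_of_mem_vEBAux (List.mem_of_getElem? hxT)
            rw [htrh] at this; omega
          have hylen : y.length ≤ m - 1 := by
            have := length_lt_of_mem_vEBAux (List.mem_of_getElem? hyT)
            rw [htrh] at this; omega
          obtain ⟨k, z, hik, hkj, hkz, hzpre⟩ := ihtop.2 i j x y hxT hyT hij
            ((leftOf_take_iff hxlen).2 hxl) ((rightOf_take_iff hylen).2 hyr)
          refine ⟨k, z, hik, hkj, ?_, hzpre.trans (List.take_prefix _ _)⟩
          rw [hdec, List.getElem?_append, if_pos (by omega)]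
          exact hkz
        · rcases getElem?_append_split hy1 with ⟨hjFL, hyFL⟩ | ⟨hjFL, hy2⟩
          · exact absurd hyr (fun h =>
              lex_asymm (hFLleft y (List.mem_of_getElem? hyFL)) h)
          · rcases getElem?_append_split hy2 with ⟨hjQ, hyQ⟩ | ⟨hjQ, hyFR⟩
            · -- y in Q
              obtain ⟨y', hy', rfl⟩ := hQel _ _ hyQ
              have hj0 : j - T.length - FL.length ≠ 0 := by
                intro h0
                rw [h0] at hy'
                rw [hrest] at hy'
                simp at hy'
                subst hy'
                rw [List.append_nil] at hyr
                exact not_right_of_prefix hpre hyr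
              rcases getElem?_append_split hxi with ⟨hiT, hxT⟩ | ⟨hiT, hx1⟩
              · exact ⟨T.length + FL.length, ℓ.take m, by omega, by omega, hqstar, hpre⟩
              · rcases getElem?_append_split hx1 with ⟨hiFL, hxFL⟩ | ⟨hiFL, hx2⟩
                · exact ⟨T.length + FL.length, ℓ.take m, by omega, by omega, hqstar, hpre⟩
                · rcases getElem?_append_split hx2 with ⟨hiQ, hxQ⟩ | ⟨hiQ, hxFR⟩
                  · obtain ⟨x', hx', rfl⟩ := hQel _ _ hxQ
                    have hxl' : LeftOfBranch x' (ℓ.drop m) := (leftOf_drop_iff hmℓ).1 hxl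
                    have hyr' : RightOfBranch y' (ℓ.drop m) := (rightOf_drop_iff hmℓ).1 hyr
                    obtain ⟨k', z', h1, h2, h3, h4⟩ := ihsub.2 _ _ _ _ hx' hy'
                      (by omega) hxl' hyr'
                    exact ⟨T.length + FL.length + k', ℓ.take m ++ z', by omega, by omega,
                      hgetQ k' z' h3, prefix_take_append h4⟩
                  · exact absurd hxl (fun h =>
                      lex_asymm h (hFRright x (List.mem_of_getElem? hxFR)))
            · -- y in FR
              rcases getElem?_append_split hxi with ⟨hiT, hxT⟩ | ⟨hiT, hx1⟩
              · exact ⟨T.length + FL.length, ℓ.take m, by omega, by omega, hqstar, hpre⟩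
              · rcases getElem?_append_split hx1 with ⟨hiFL, hxFL⟩ | ⟨hiFL, hx2⟩
                · exact ⟨T.length + FL.length, ℓ.take m, by omega, by omega, hqstar, hpre⟩
                · rcases getElem?_append_split hx2 with ⟨hiQ, hxQ⟩ | ⟨hiQ, hxFR⟩
                  · obtain ⟨x', hx', rfl⟩ := hQel _ _ hxQ
                    have hxl' : LeftOfBranch x' (ℓ.drop m) := (leftOf_drop_iff hmℓ).1 hxl
                    obtain ⟨k', z', hik', hk'z, hz'⟩ := ihsub.1 _ _ hx' hxl'
                    have hk'lt : k' < (vEBAux ε n s).length := (List.getElem?_eq_some_iff.1 hk'z).1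
                    exact ⟨T.length + FL.length + k', ℓ.take m ++ z', by omega, by omega,
                      hgetQ k' z' hk'z, prefix_take_append hz'⟩
                  · exact absurd hxl (fun h =>
                      lex_asymm h (hFRright x (List.mem_of_getElem? hxFR)))



theorem nodup_indexOf_eq {l : List (List ℕ)} (h : l.Nodup) {i : ℕ} {a : List ℕ}
    (ha : l[i]? = some a) : l.idxOf a = i := by
  have hinst : (List.instBEq : BEq (List ℕ)) = instBEqOfDecidableEq :=
    lawful_beq_subsingleton _ _
  rw [hinst]
  have hmem := List.mem_of_getElem? ha
  have h1 : @List.idxOf _ instBEqOfDecidableEq a l < l.length :=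
    (@List.idxOf_lt_length_iff _ instBEqOfDecidableEq inferInstance l a).2 hmem
  obtain ⟨hlt, he⟩ := List.getElem?_eq_some_iff.1 ha
  have h2 : l[@List.idxOf _ instBEqOfDecidableEq a l] = a := @List.getElem_idxOf _ instBEqOfDecidableEq inferInstance a l h1
  exact (h.getElem_inj_iff (hi := h1) (hj := hlt)).1 (by rw [h2, he])

/-- If a memory interval `A` is partitioned by a single branch `B`
(disjoint from `A`, given by its leaf `ℓ`) into a nonempty left component and a nonempty
right component, then every vertex of the right component precedes every vertex of the
left component in `vEB_ε(T)`. -/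
theorem right_component_before_left
    (ε : ℝ) (hε0 : 0 < ε) (hε1 : ε ≤ 1/2) (t : OTree) (ht : Uniform t)
    (A : Set (List ℕ)) (hA : MemInterval ε t A)
    (ℓ : List ℕ) (hℓ : IsLeaf t ℓ)
    (hdisj : ∀ p ∈ A, ¬ p <+: ℓ)
    (hleft : ∃ p ∈ A, LeftOfBranch p ℓ)
    (hright : ∃ p ∈ A, RightOfBranch p ℓ)
    (u : List ℕ) (hu : u ∈ A) (hur : RightOfBranch u ℓ)
    (v : List ℕ) (hv : v ∈ A) (hvl : LeftOfBranch v ℓ) :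
    pos ε t u < pos ε t v := by

  obtain ⟨i0, nn, rfl⟩ := hA
  simp only [Set.mem_setOf_eq] at hu hv hdisj
  have hnd : (vEB ε t).Nodup := vEBAux_nodup hε0 hε1 le_rfl
  have hidx : ∀ w : List ℕ, w ∈ ((vEB ε t).drop i0).take nn →
      ∃ k, k < nn ∧ (vEB ε t)[i0 + k]? = some w := by
    intro w hw
    obtain ⟨k, hk, hke⟩ := List.mem_iff_getElem.1 hw
    have hk2 : k < nn := by
      have := hk
      rw [List.length_take] at this
      omega
    refine ⟨k, hk2, ?_⟩
    rw [← List.getElem?_drop]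
    have : (((vEB ε t).drop i0).take nn)[k]? = some w := by
      rw [List.getElem?_eq_getElem hk, hke]
    rwa [List.getElem?_take, if_pos hk2] at this
  obtain ⟨ku, hku, hku'⟩ := hidx u hu
  obtain ⟨kv, hkv, hkv'⟩ := hidx v hv
  have hpu : pos ε t u = i0 + ku := nodup_indexOf_eq hnd hku'
  have hpv : pos ε t v = i0 + kv := nodup_indexOf_eq hnd hkv'
  rw [hpu, hpv]
  by_contra hc
  push_neg at hc
  have hne : u ≠ v := by
    intro h
    subst h
    exact lex_asymm hvl hur
  have hkne : kv ≠ ku := by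
    intro h
    subst h
    rw [hku'] at hkv'
    exact hne (by simpa using hkv')
  have hlt : i0 + kv < i0 + ku := by omega
  obtain ⟨k, z, h1, h2, h3, h4⟩ :=
    (main_sep hε0 hε1 (height t) t ℓ le_rfl ht hℓ).2 (i0 + kv) (i0 + ku) v u
      hkv' hku' hlt hvl hur
  have hzmem : z ∈ ((vEB ε t).drop i0).take nn := by
    apply List.mem_of_getElem? (i := k - i0)
    rw [List.getElem?_take, if_pos (by omega), List.getElem?_drop,
      show i0 + (k - i0) = k by omega]
    exact h3
  exact hdisj z hzmem h4


end VEB
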